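/- Let f : 2^E → ℝ≥0 be monotone submodular and g a metric diversity function g(S) = Σ_{ {u,v} ⊆ S } d(u,v) for a metric d. Then for any disjoint A, B ⊆ E with |A| = a ≥ 1 and |B| = b ≥ 1, the sum f + g satisfies Σ_{e∈B} (f+g)_A(e) ≥ (a/(a+b−1)) · (f+g)_A(B). -/
import Mathlib


open Finset

lemma submod_marg {E : Type*} [DecidableEq E]
    (f : Finset E → ℝ)
    (hsub : ∀ S T : Finset E, f S + f T ≥ f (S ∪ T) + f (S ∩ T))
    (A : Finset E) :
    ∀ B : Finset E, Disjoint A B →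
      f (A ∪ B) - f A ≤ ∑ e ∈ B, (f (insert e A) - f A) := by
  intro B
  induction B using Finset.induction_on with
  | empty => simp
  | @insert e B' hne ih =>
    intro hd
    have heA : e ∉ A := Finset.disjoint_right.mp hd (mem_insert_self e B')
    have hd' : Disjoint A B' := hd.mono_right (subset_insert e B')
    have h1 : (A ∪ B') ∪ insert e A = A ∪ insert e B' := by
      ext x; simp only [mem_union, mem_insert]; tauto
    have h2 : (A ∪ B') ∩ insert e A = A := by
      ext x
      simp only [mem_inter, mem_union, mem_insert]
      constructor
      · rintro ⟨hx1 | hx1, hx2 | hx2⟩ <;> try tauto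
        · subst hx2; exact absurd hx1 hne
      · intro h; tauto
    have key := hsub (A ∪ B') (insert e A)
    rw [h1, h2] at key
    rw [Finset.sum_insert hne]
    have := ih hd'
    linarith

theorem stmt_14 {E : Type*} [Fintype E] [DecidableEq E]
    (f : Finset E → ℝ) (hnn : ∀ S, 0 ≤ f S)
    (hmono : ∀ S T : Finset E, S ⊆ T → f S ≤ f T)
    (hsub : ∀ S T : Finset E, f S + f T ≥ f (S ∪ T) + f (S ∩ T))
    (d : E → E → ℝ)
    (hdnn : ∀ u v, 0 ≤ d u v)
    (hsymm : ∀ u v, d u v = d v u)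
    (hself : ∀ u, d u u = 0)
    (htri : ∀ u v w, d u w ≤ d u v + d v w)
    (g : Finset E → ℝ)
    (hg : ∀ S : Finset E, g S = (∑ u ∈ S, ∑ v ∈ S, d u v) / 2)
    (A B : Finset E) (a b : ℕ) (ha : A.card = a) (hb : B.card = b)
    (ha1 : 1 ≤ a) (hb1 : 1 ≤ b) (hAB : Disjoint A B) :
    ∑ e ∈ B, ((f (insert e A) + g (insert e A)) - (f A + g A)) ≥
      ((a : ℝ) / ((a : ℝ) + b - 1)) *
        ((f (A ∪ B) + g (A ∪ B)) - (f A + g A)) := by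
  classical
  -- abbreviations
  set h : E → ℝ := fun u => ∑ x ∈ A, d u x with hh
  set D : ℝ := ∑ u ∈ B, h u with hD
  set S2B : ℝ := ∑ u ∈ B, ∑ v ∈ B, d u v with hS2B
  have hh_nn : ∀ u, 0 ≤ h u := fun u => Finset.sum_nonneg fun x _ => hdnn u x
  have hD0 : 0 ≤ D := Finset.sum_nonneg fun u _ => hh_nn u
  have hS2B0 : 0 ≤ S2B := Finset.sum_nonneg fun u _ =>
    Finset.sum_nonneg fun v _ => hdnn u v
  -- marginal of g at a single element
  have hge : ∀ e ∈ B, g (insert e A) - g A = h e := by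
    intro e he
    have heA : e ∉ A := Finset.disjoint_right.mp hAB he
    rw [hg, hg, Finset.sum_insert heA, Finset.sum_insert heA]
    simp only [Finset.sum_insert heA]
    rw [Finset.sum_add_distrib]
    have hsw : ∑ u ∈ A, d u e = ∑ u ∈ A, d e u :=
      Finset.sum_congr rfl fun u _ => hsymm u e
    rw [hsw, hself]
    simp only [hh]
    ring
  -- marginal of g for the whole set B
  have hGT : g (A ∪ B) - g A = D + S2B / 2 := by
    rw [hg, hg, Finset.sum_union hAB]
    simp only [Finset.sum_union hAB]
    rw [Finset.sum_add_distrib, Finset.sum_add_distrib]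
    have hsw : ∑ u ∈ A, ∑ v ∈ B, d u v = D := by
      rw [Finset.sum_comm]
      simp only [hD, hh]
      exact Finset.sum_congr rfl fun v _ =>
        Finset.sum_congr rfl fun u _ => hsymm u v
    rw [hsw]
    simp only [hD, hS2B, hh]
    ring
  -- triangle inequality bound : a * S2B ≤ 2 (b-1) D
  have htr : (a : ℝ) * S2B ≤ 2 * ((b : ℝ) - 1) * D := by
    have herase : ∀ u ∈ B, ∑ v ∈ B, d u v = ∑ v ∈ B.erase u, d u v := by
      intro u hu
      rw [← Finset.add_sum_erase B _ hu, hself, zero_add]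
    have hpt : ∀ u v : E, (a : ℝ) * d u v ≤ h u + h v := by
      intro u v
      have h1 : (a : ℝ) * d u v = ∑ _x ∈ A, d u v := by
        rw [Finset.sum_const, ha, nsmul_eq_mul]
      have h2 : ∑ x ∈ A, (d u x + d x v) = h u + h v := by
        rw [Finset.sum_add_distrib]
        simp only [hh]
        congr 1
        exact Finset.sum_congr rfl fun x _ => hsymm x v
      rw [h1, ← h2]
      exact Finset.sum_le_sum fun x _ => htri u x v
    have hcardB : (B.card : ℝ) = b := by rw [hb]
    calc (a : ℝ) * S2B = ∑ u ∈ B, ∑ v ∈ B.erase u, (a : ℝ) * d u v := by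
          rw [hS2B, Finset.mul_sum]
          refine Finset.sum_congr rfl fun u hu => ?_
          rw [herase u hu, Finset.mul_sum]
      _ ≤ ∑ u ∈ B, ∑ v ∈ B.erase u, (h u + h v) :=
          Finset.sum_le_sum fun u _ => Finset.sum_le_sum fun v _ => hpt u v
      _ = 2 * ((b : ℝ) - 1) * D := by
          have hinner : ∀ u ∈ B, ∑ v ∈ B.erase u, (h u + h v)
              = ((b : ℝ) - 1) * h u + (D - h u) := by
            intro u hu
            rw [Finset.sum_add_distrib, Finset.sum_const,
              Finset.card_erase_of_mem hu, hb, nsmul_eq_mul]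
            have he1 : ∑ v ∈ B.erase u, h v = D - h u := by
              have := Finset.add_sum_erase B h hu
              rw [hD]; linarith
            rw [he1, Nat.cast_sub hb1, Nat.cast_one]
          rw [Finset.sum_congr rfl hinner, Finset.sum_add_distrib,
            Finset.sum_sub_distrib, ← Finset.mul_sum, Finset.sum_const, hb,
            nsmul_eq_mul]
          rw [← hD]
          ring
  -- submodular part
  have hSF : f (A ∪ B) - f A ≤ ∑ e ∈ B, (f (insert e A) - f A) :=
    submod_marg f hsub A B hAB
  have hF0 : 0 ≤ f (A ∪ B) - f A :=
    sub_nonneg.mpr (hmono A (A ∪ B) Finset.subset_union_left)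
  -- split the LHS sum
  have hsplit : ∑ e ∈ B, ((f (insert e A) + g (insert e A)) - (f A + g A))
      = (∑ e ∈ B, (f (insert e A) - f A)) + D := by
    have : ∀ e ∈ B, (f (insert e A) + g (insert e A)) - (f A + g A)
        = (f (insert e A) - f A) + h e := by
      intro e he
      have := hge e he
      linarith
    rw [Finset.sum_congr rfl this, Finset.sum_add_distrib, hD]
  rw [ge_iff_le, hsplit]
  -- the coefficient
  set t : ℝ := (a : ℝ) + b - 1 with ht_def
  have hb1' : (1 : ℝ) ≤ (b : ℝ) := by exact_mod_cast hb1
  have ha1' : (1 : ℝ) ≤ (a : ℝ) := by exact_mod_cast ha1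
  have ht : 0 < t := by rw [ht_def]; linarith
  have hat : (a : ℝ) ≤ t := by rw [ht_def]; linarith
  have hc1 : (a : ℝ) / t ≤ 1 := (div_le_one ht).mpr hat
  have hc0 : 0 ≤ (a : ℝ) / t := div_nonneg (by positivity) ht.le
  have H1 : (a : ℝ) / t * (f (A ∪ B) - f A) ≤ ∑ e ∈ B, (f (insert e A) - f A) := by
    have : (a : ℝ) / t * (f (A ∪ B) - f A) ≤ 1 * (f (A ∪ B) - f A) :=
      mul_le_mul_of_nonneg_right hc1 hF0
    linarith
  have H2 : (a : ℝ) / t * (D + S2B / 2) ≤ D := by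
    rw [div_mul_eq_mul_div, div_le_iff₀ ht]
    have : D * t = (a : ℝ) * D + ((b : ℝ) - 1) * D := by rw [ht_def]; ring
    nlinarith [htr]
  have hrw : (f (A ∪ B) + g (A ∪ B)) - (f A + g A)
      = (f (A ∪ B) - f A) + (D + S2B / 2) := by
    have := hGT; linarith
  rw [hrw, mul_add]
  exact add_le_add H1 H2
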